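/- Fix q ∈ ℝ^d with q ≠ 0, η > 0, x ∈ ℝ^d, and a convex, three times differentiable function ℓ̂ : ℝ → ℝ. Let s : [0,1] → ℝ be differentiable with s(0) = 0 and s'(h) = η ℓ̂'(⟨q, x − s(h) q⟩) for all h ∈ [0,1]. Write p(h) = ⟨q, x − s(h) q⟩, g(h) = ℓ̂'(p(h)) q, g = g(0), ℓ(w) = ℓ̂(⟨q,w⟩), θ = x/η, and let ℓ*(z) = sup_w (⟨z,w⟩ − ℓ(w)). Suppose that either (i) for all h ∈ [0,1], ℓ̂'(p(h)) ≥ 0 and ℓ̂'''(p(h)) ≥ 0, or (ii) for all h ∈ [0,1], ℓ̂'(p(h)) ≤ 0 and ℓ̂'''(p(h)) ≤ 0. Then for every h ∈ [0,1]: (η/2)‖θ − g(h)‖² + ℓ*(g(h)) ≤ (η/2)‖θ − g‖² + ℓ*(g). -/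

import Mathlib

open scoped RealInnerProductSpace
open Set

/-- Core real-analytic lemma: if `f ≥ 0`, `f' ≤ 0`, `f'' ≥ 0` on `[0,1]`, then for
`u ∈ [0,h]` with `h ≤ 1` we have `0 ≤ f u * (f h - f u - f' u)`. -/
lemma iwa_core (h : ℝ) (hh : h ∈ Icc (0:ℝ) 1) (f f' f'' : ℝ → ℝ)
    (hf : ∀ u ∈ Icc (0:ℝ) 1, HasDerivAt f (f' u) u)
    (hf' : ∀ u ∈ Icc (0:ℝ) 1, HasDerivAt f' (f'' u) u)
    (h0 : ∀ u ∈ Icc (0:ℝ) 1, 0 ≤ f u)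
    (h1 : ∀ u ∈ Icc (0:ℝ) 1, f' u ≤ 0)
    (h2 : ∀ u ∈ Icc (0:ℝ) 1, 0 ≤ f'' u) :
    ∀ u ∈ Icc (0:ℝ) h, 0 ≤ f u * (f h - f u - f' u) := by
  intro u hu
  have hu1 : u ∈ Icc (0:ℝ) 1 := ⟨hu.1, hu.2.trans hh.2⟩
  have hmono : MonotoneOn f' (Icc (0:ℝ) 1) := by
    apply monotoneOn_of_deriv_nonneg (convex_Icc 0 1)
    · exact fun y hy => ((hf' y hy).continuousAt).continuousWithinAt
    · intro y hy
      rw [interior_Icc] at hy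
      exact (hf' y (Ioo_subset_Icc_self hy)).differentiableAt.differentiableWithinAt
    · intro y hy
      rw [interior_Icc] at hy
      rw [(hf' y (Ioo_subset_Icc_self hy)).deriv]
      exact h2 y (Ioo_subset_Icc_self hy)
  have key : f' u ≤ f h - f u := by
    rcases eq_or_lt_of_le hu.2 with heq | hlt
    · subst heq
      have := h1 u hu1
      linarith
    · obtain ⟨c, hc, hceq⟩ := exists_hasDerivAt_eq_slope f f' hlt
        (fun y hy =>
          ((hf y ⟨hu.1.trans hy.1, hy.2.trans hh.2⟩).continuousAt).continuousWithinAt)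
        (fun y hy => hf y ⟨hu.1.trans hy.1.le, hy.2.le.trans hh.2⟩)
      have hc1 : c ∈ Icc (0:ℝ) 1 := ⟨hu.1.trans hc.1.le, hc.2.le.trans hh.2⟩
      have hle : f' u ≤ f' c := hmono hu1 hc1 hc.1.le
      have heq2 : f h - f u = f' c * (h - u) := by
        rw [hceq]
        exact (div_mul_cancel₀ _ (sub_ne_zero.2 hlt.ne')).symm
      have hfu : f' u ≤ 0 := h1 u hu1
      have h01 : 0 < h - u := by linarith
      have h02 : h - u ≤ 1 := by
        have := hu.1
        have := hh.2
        linarith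
      nlinarith [mul_nonneg (sub_nonneg.2 hle) h01.le]
  exact mul_nonneg (h0 u hu1) (by linarith)

/-- The pointwise inequality in the proof of Theorem 3.2: under the sign
conditions on `ℓ̂'` and `ℓ̂'''` along the gradient flow, for every `h ∈ [0,1]`
we have `ψ*(θ - g(h)) + ℓ*(g(h)) ≤ ψ*(θ - g) + ℓ*(g)`, where
`ψ*(θ) = (η/2)‖θ‖²`, `θ = x/η`, `g(h) = ℓ̂'(p(h)) q` and `g = g(0)`. -/
theorem iwa_pointwise_conjugate_inequality
    (d : ℕ) (q : EuclideanSpace ℝ (Fin d)) (hq : q ≠ 0) (η : ℝ) (hη : 0 < η)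
    (x : EuclideanSpace ℝ (Fin d))
    (l : ℝ → ℝ) (hconv : ConvexOn ℝ Set.univ l)
    (hd1 : Differentiable ℝ l) (hd2 : Differentiable ℝ (deriv l))
    (hd3 : Differentiable ℝ (deriv (deriv l)))
    (s : ℝ → ℝ) (hs0 : s 0 = 0)
    (p : ℝ → ℝ) (hp : ∀ h, p h = ⟪q, x - s h • q⟫)
    (hsODE : ∀ h ∈ Set.Icc (0 : ℝ) 1, HasDerivAt s (η * deriv l (p h)) h)
    -- g(h) = ℓ̂'(p(h)) q
    (G : ℝ → EuclideanSpace ℝ (Fin d)) (hG : ∀ h, G h = deriv l (p h) • q)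
    -- ℓ*(z) for ℓ(w) = ℓ̂(⟨q, w⟩)
    (lstar : EuclideanSpace ℝ (Fin d) → EReal)
    (hlstar : ∀ zz, lstar zz = ⨆ w, ((⟪zz, w⟫ - l ⟪q, w⟫ : ℝ) : EReal))
    -- sign conditions: (i) or (ii)
    (hsign : (∀ h ∈ Set.Icc (0 : ℝ) 1,
        0 ≤ deriv l (p h) ∧ 0 ≤ deriv (deriv (deriv l)) (p h))
      ∨ (∀ h ∈ Set.Icc (0 : ℝ) 1,
        deriv l (p h) ≤ 0 ∧ deriv (deriv (deriv l)) (p h) ≤ 0)) :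
    ∀ h ∈ Set.Icc (0 : ℝ) 1,
      ((η / 2 * ‖η⁻¹ • x - G h‖ ^ 2 : ℝ) : EReal) + lstar (G h)
        ≤ ((η / 2 * ‖η⁻¹ • x - G 0‖ ^ 2 : ℝ) : EReal) + lstar (G 0) := by
  have hL : (0:ℝ) < ‖q‖ ^ 2 := by
    have : 0 < ‖q‖ := norm_pos_iff.mpr hq
    positivity
  set L : ℝ := ‖q‖ ^ 2 with hLdef
  set c : ℝ := ⟪q, x⟫ with hcdef
  -- p as an affine function of s
  have hp' : ∀ u, p u = c - s u * L := by
    intro u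
    rw [hp u, inner_sub_right, real_inner_smul_right, real_inner_self_eq_norm_sq]
  have hpfun : p = fun u => c - s u * L := funext hp'
  -- monotonicity of deriv l and nonnegativity of the second derivative
  have hmono : ∀ a b : ℝ, a ≤ b → deriv l a ≤ deriv l b := by
    intro a b hab
    exact hconv.monotoneOn_deriv (fun y _ => hd1 y) (mem_univ a) (mem_univ b) hab
  have hl2 : ∀ y : ℝ, 0 ≤ deriv (deriv l) y := by
    intro y
    have hd := (hd2 y).hasDerivAt
    refine ge_of_tendsto (hasDerivAt_iff_tendsto_slope.1 hd) ?_
    filter_upwards [self_mem_nhdsWithin] with t ht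
    have htne : t ≠ y := ht
    rcases lt_or_gt_of_ne htne with hlt | hgt
    · rw [slope_def_field, div_nonneg_iff]
      right
      constructor
      · have := hmono t y hlt.le; linarith
      · linarith
    · rw [slope_def_field]
      apply div_nonneg
      · have := hmono y t hgt.le; linarith
      · linarith
  -- tangent line inequality for the convex function l
  have htangent : ∀ t₀ t : ℝ, l t₀ + deriv l t₀ * (t - t₀) ≤ l t := by
    intro t₀ t
    rcases lt_trichotomy t t₀ with hlt | heq | hgt
    · have hs := hconv.slope_le_deriv (mem_univ t) (mem_univ t₀) hlt (hd1 t₀)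
      rw [slope_def_field] at hs
      rw [div_le_iff₀ (by linarith)] at hs
      nlinarith
    · subst heq; simp
    · have hs := hconv.deriv_le_slope (mem_univ t₀) (mem_univ t) hgt (hd1 t₀)
      rw [slope_def_field] at hs
      rw [le_div_iff₀ (by linarith)] at hs
      nlinarith
  -- value of the conjugate at gradient points
  have conj : ∀ u : ℝ, lstar (G u) = ((deriv l (p u) * p u - l (p u) : ℝ) : EReal) := by
    intro u
    rw [hG u, hlstar]
    apply le_antisymm
    · apply iSup_le
      intro w
      apply EReal.coe_le_coe_iff.2
      rw [real_inner_smul_left]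
      have := htangent (p u) ⟪q, w⟫
      nlinarith
    · have hqw : ⟪q, ((p u / L) • q : EuclideanSpace ℝ (Fin d))⟫ = p u := by
        rw [real_inner_smul_right, real_inner_self_eq_norm_sq, ← hLdef]
        field_simp
      have hval : ((⟪deriv l (p u) • q, ((p u / L) • q : EuclideanSpace ℝ (Fin d))⟫
            - l ⟪q, ((p u / L) • q : EuclideanSpace ℝ (Fin d))⟫ : ℝ) : EReal)
          = ((deriv l (p u) * p u - l (p u) : ℝ) : EReal) := by
        rw [real_inner_smul_left, hqw]
      rw [← hval]
      exact le_iSup (fun w : EuclideanSpace ℝ (Fin d) =>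
        ((⟪deriv l (p u) • q, w⟫ - l ⟪q, w⟫ : ℝ) : EReal)) _
  -- derivative of p
  have hP : ∀ u ∈ Icc (0:ℝ) 1, HasDerivAt p (-(η * deriv l (p u) * L)) u := by
    intro u hu
    have h1 := ((hsODE u hu).mul_const L).const_sub c
    rw [← hpfun] at h1
    exact h1
  -- first derivative of A := deriv l ∘ p
  set A' : ℝ → ℝ := fun u => deriv (deriv l) (p u) * (-(η * deriv l (p u) * L)) with hA'def
  have hA : ∀ u ∈ Icc (0:ℝ) 1, HasDerivAt (fun y => deriv l (p y)) (A' u) u := by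
    intro u hu
    exact (hd2 (p u)).hasDerivAt.comp u (hP u hu)
  -- second derivative
  set A'' : ℝ → ℝ := fun u =>
      deriv (deriv (deriv l)) (p u) * (-(η * deriv l (p u) * L)) * (-(η * deriv l (p u) * L))
        + deriv (deriv l) (p u) * (-(η * A' u * L)) with hA''def
  have hA' : ∀ u ∈ Icc (0:ℝ) 1, HasDerivAt A' (A'' u) u := by
    intro u hu
    have hB : HasDerivAt (fun y => deriv (deriv l) (p y))
        (deriv (deriv (deriv l)) (p u) * (-(η * deriv l (p u) * L))) u :=
      (hd3 (p u)).hasDerivAt.comp u (hP u hu)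
    have hC : HasDerivAt (fun y => -(η * deriv l (p y) * L)) (-(η * A' u * L)) u :=
      (((hA u hu).const_mul η).mul_const L).neg
    exact hB.mul hC
  intro h hh
  -- the key pointwise sign fact
  have key : ∀ u ∈ Icc (0:ℝ) h,
      0 ≤ deriv l (p u) * (deriv l (p h) - deriv l (p u) - A' u) := by
    rcases hsign with hs | hs
    · refine iwa_core h hh (fun y => deriv l (p y)) A' A'' hA hA' (fun u hu => (hs u hu).1) ?_ ?_
      · intro u hu
        have h1 := hl2 (p u)
        have h2 := (hs u hu).1
        show deriv (deriv l) (p u) * (-(η * deriv l (p u) * L)) ≤ 0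
        nlinarith [mul_nonneg (mul_nonneg (mul_nonneg h1 hη.le) h2) hL.le]
      · intro u hu
        have h1 := hl2 (p u)
        have h2 := (hs u hu).1
        have h3 := (hs u hu).2
        have h4 : A' u ≤ 0 := by
          show deriv (deriv l) (p u) * (-(η * deriv l (p u) * L)) ≤ 0
          nlinarith [mul_nonneg (mul_nonneg (mul_nonneg h1 hη.le) h2) hL.le]
        show 0 ≤ deriv (deriv (deriv l)) (p u) * (-(η * deriv l (p u) * L))
            * (-(η * deriv l (p u) * L)) + deriv (deriv l) (p u) * (-(η * A' u * L))
        nlinarith [mul_nonneg h3 (mul_self_nonneg (η * deriv l (p u) * L)),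
          mul_nonneg h1 (mul_nonneg (mul_nonneg hη.le (neg_nonneg.2 h4)) hL.le)]
    · have hcore := iwa_core h hh (fun y => -(deriv l (p y))) (fun y => -(A' y))
        (fun y => -(A'' y)) (fun u hu => (hA u hu).neg) (fun u hu => (hA' u hu).neg)
        (fun u hu => by
          have := (hs u hu).1
          show (0:ℝ) ≤ -(deriv l (p u))
          linarith)
        (fun u hu => by
          have h1 := hl2 (p u)
          have h2 := (hs u hu).1
          show -(deriv (deriv l) (p u) * (-(η * deriv l (p u) * L))) ≤ 0
          nlinarith [mul_nonneg h1 (mul_nonneg (mul_nonneg hη.le (neg_nonneg.2 h2)) hL.le)])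
        (fun u hu => by
          have h1 := hl2 (p u)
          have h2 := (hs u hu).1
          have h3 := (hs u hu).2
          have h4 : 0 ≤ A' u := by
            show 0 ≤ deriv (deriv l) (p u) * (-(η * deriv l (p u) * L))
            nlinarith [mul_nonneg h1 (mul_nonneg (mul_nonneg hη.le (neg_nonneg.2 h2)) hL.le)]
          show (0:ℝ) ≤ -(deriv (deriv (deriv l)) (p u) * (-(η * deriv l (p u) * L))
            * (-(η * deriv l (p u) * L)) + deriv (deriv l) (p u) * (-(η * A' u * L)))
          nlinarith [mul_nonneg (neg_nonneg.2 h3) (mul_self_nonneg (η * deriv l (p u) * L)),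
            mul_nonneg h1 (mul_nonneg (mul_nonneg hη.le h4) hL.le)])
      intro u hu
      have hthis : (0:ℝ) ≤ (-(deriv l (p u))) * ((-(deriv l (p h))) - (-(deriv l (p u)))
          - (-(A' u))) := hcore u hu
      nlinarith [hthis]
  -- the Lyapunov function Ψ and its derivative
  have hsub : Icc (0:ℝ) h ⊆ Icc (0:ℝ) 1 := Icc_subset_Icc le_rfl hh.2
  have hΨ : ∀ u ∈ Icc (0:ℝ) 1,
      HasDerivAt (fun y => L * (η / 2 * deriv l (p y) ^ 2 - deriv l (p h) * s y) - l (p y))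
        (L * (η / 2 * (2 * deriv l (p u) * A' u) - deriv l (p h) * (η * deriv l (p u)))
          - deriv l (p u) * (-(η * deriv l (p u) * L))) u := by
    intro u hu
    have h1 : HasDerivAt (fun y => deriv l (p y) ^ 2) (2 * deriv l (p u) * A' u) u := by
      have := (hA u hu).fun_pow 2
      simpa using this
    have h2 := h1.const_mul (η / 2)
    have h3 : HasDerivAt (fun y => deriv l (p h) * s y)
        (deriv l (p h) * (η * deriv l (p u))) u := (hsODE u hu).const_mul _
    have h4 := (h2.sub h3).const_mul L
    have h5 : HasDerivAt (fun y => l (p y)) (deriv l (p u) * (-(η * deriv l (p u) * L))) u :=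
      (hd1 (p u)).hasDerivAt.comp u (hP u hu)
    exact h4.sub h5
  have hanti : AntitoneOn
      (fun y => L * (η / 2 * deriv l (p y) ^ 2 - deriv l (p h) * s y) - l (p y))
      (Icc (0:ℝ) h) := by
    apply antitoneOn_of_deriv_nonpos (convex_Icc 0 h)
    · exact fun u hu => ((hΨ u (hsub hu)).continuousAt).continuousWithinAt
    · intro u hu
      rw [interior_Icc] at hu
      exact (hΨ u (hsub (Ioo_subset_Icc_self hu))).differentiableAt.differentiableWithinAt
    · intro u hu
      rw [interior_Icc] at hu
      rw [(hΨ u (hsub (Ioo_subset_Icc_self hu))).deriv]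
      have hk := key u (Ioo_subset_Icc_self hu)
      nlinarith [mul_nonneg (mul_nonneg hη.le hL.le) hk]
  have hΨle : L * (η / 2 * deriv l (p h) ^ 2 - deriv l (p h) * s h) - l (p h)
      ≤ L * (η / 2 * deriv l (p 0) ^ 2 - deriv l (p h) * s 0) - l (p 0) :=
    hanti ⟨le_refl 0, hh.1⟩ ⟨hh.1, le_refl h⟩ hh.1
  -- expansion of the quadratic term
  have expand : ∀ (a u : ℝ),
      η / 2 * ‖η⁻¹ • x - a • q‖ ^ 2 + (a * p u - l (p u))
        = η / 2 * ‖η⁻¹ • x‖ ^ 2 + (L * (η / 2 * a ^ 2 - a * s u) - l (p u)) := by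
    intro a u
    have hnorm : ‖η⁻¹ • x - a • q‖ ^ 2
        = ‖η⁻¹ • x‖ ^ 2 - 2 * (η⁻¹ * (a * c)) + a ^ 2 * L := by
      have hxq : ⟪x, q⟫ = c := by rw [hcdef]; exact real_inner_comm q x
      rw [norm_sub_sq_real, real_inner_smul_left, real_inner_smul_right, hxq, hLdef]
      simp only [norm_smul, mul_pow, Real.norm_eq_abs, sq_abs]
    rw [hnorm, hp' u]
    field_simp
    ring
  -- assemble
  rw [conj h, conj 0, hG h, hG 0, ← EReal.coe_add, ← EReal.coe_add, EReal.coe_le_coe_iff,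
    expand (deriv l (p h)) h, expand (deriv l (p 0)) 0]
  have hs0' : s 0 = 0 := hs0
  rw [hs0'] at hΨle ⊢
  simp only [mul_zero, sub_zero] at hΨle ⊢
  linarith
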